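/- Suppose q: D(G) → ℍ∖{0} satisfies Σ_{o(g)=u}|q(g)|² = 1 at every vertex u. Set a(e) = √2·q(e), b(e) = √2·q(e⁻¹). Then (1) K*K = L*L = 2·Iₙ, (2) J₀ K L* = L L*, and (3) L* J₀ L = W̃, where W̃_{uv} = 2 q((u,v))* q((v,u)) if (v,u) ∈ D(G) and 0 otherwise. -/
import Mathlib


open Quaternion Matrix Finset

noncomputable section

/-- Simplex part of a quaternion: `x = S(x) + j·P(x)`. -/
def qS (x : Quaternion ℝ) : ℂ := ⟨x.re, x.imI⟩

/-- Perplex part of a quaternion. -/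
def qP (x : Quaternion ℝ) : ℂ := ⟨x.imJ, -x.imK⟩

/-- Embedding of `ℂ` into the quaternions (span of `1, i`). -/
def cq (z : ℂ) : Quaternion ℝ := ⟨z.re, z.im, 0, 0⟩

/-- The quaternion unit `j`. -/
def jq : Quaternion ℝ := ⟨0, 0, 1, 0⟩

/-- The standard complex representation of a quaternionic matrix `M = A + jB`,
`ψ(M) = [[A, -conj B],[B, conj A]]`. -/
def psi {m n : Type*} (M : Matrix m n (Quaternion ℝ)) :
    Matrix (m ⊕ m) (n ⊕ n) ℂ :=
  Matrix.fromBlocks (M.map qS) (-(M.map fun x => star (qP x)))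
    (M.map qP) (M.map fun x => star (qS x))

variable {V : Type*}

/-- Arc-by-vertex matrix `K` with `K_{ev} = a(e)` if `o(e) = v`. Arcs are the
elements of a symmetric finite set `E` of ordered pairs of vertices. -/
def Karc [DecidableEq V] (E : Finset (V × V)) (a : V × V → Quaternion ℝ) :
    Matrix ↥E V (Quaternion ℝ) :=
  Matrix.of fun e v => if e.1.1 = v then a e.1 else 0

/-- Arc-by-vertex matrix `L` with `L_{ev} = b(e)` if `t(e) = v`. -/
def Larc [DecidableEq V] (E : Finset (V × V)) (b : V × V → Quaternion ℝ) :
    Matrix ↥E V (Quaternion ℝ) :=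
  Matrix.of fun e v => if e.1.2 = v then b e.1 else 0

/-- The arc-inversion matrix `J₀` with `(J₀)_{ef} = 1` iff `f = e⁻¹`. -/
def J0 [DecidableEq V] (E : Finset (V × V)) : Matrix ↥E ↥E (Quaternion ℝ) :=
  Matrix.of fun e f => if f.1 = Prod.swap e.1 then 1 else 0

/-- Transition matrix of the quaternionic Szegedy walk. -/
def SzeU [DecidableEq V] (E : Finset (V × V)) (q : V × V → Quaternion ℝ) :
    Matrix ↥E ↥E (Quaternion ℝ) :=
  Matrix.of fun e f =>
    if f.1 = Prod.swap e.1 then 2 * (q e.1 * star (q e.1)) - 1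
    else if f.1.2 = e.1.1 then 2 * (q e.1 * star (q (Prod.swap f.1))) else 0

/-- The doubly weighted matrix `W̃` for general arc weights `a, b`. -/
def Wt [DecidableEq V] (E : Finset (V × V)) (a b : V × V → Quaternion ℝ) :
    Matrix V V (Quaternion ℝ) :=
  Matrix.of fun u v => if (v, u) ∈ E then star (b (v, u)) * a (v, u) else 0

/-- The diagonal matrix `D̃` with `D̃_{uu} = Σ_{o(e)=u} b(e⁻¹)* a(e)`. -/
def Dt [DecidableEq V] (E : Finset (V × V)) (a b : V × V → Quaternion ℝ) :
    Matrix V V (Quaternion ℝ) :=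
  Matrix.of fun u v =>
    if u = v then ∑ e ∈ E.filter (fun p => p.1 = u), star (b (Prod.swap e)) * a e else 0

/-- The doubly weighted matrix of the quaternionic Szegedy walk. -/
def Wtil [DecidableEq V] (E : Finset (V × V)) (q : V × V → Quaternion ℝ) :
    Matrix V V (Quaternion ℝ) :=
  Matrix.of fun u v => if (v, u) ∈ E then 2 * (star (q (u, v)) * q (v, u)) else 0

/-- The number of loops of the graph. -/
def nLoops [DecidableEq V] (E : Finset (V × V)) : ℕ :=
  (E.filter fun p => p.1 = p.2).card


section AuxSzegedy

lemma sum_subtype_collapse {α : Type*} [DecidableEq α] {M : Type*} [AddCommMonoid M]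
    (E : Finset α) (c : α) (h : c ∈ E) (F : ↥E → M) :
    (∑ g : ↥E, if (g : α) = c then F g else 0) = F ⟨c, h⟩ := by
  have key : ∀ g : ↥E, ((g : α) = c) ↔ g = ⟨c, h⟩ := fun g =>
    (Subtype.ext_iff (p := fun x => x ∈ E) (a1 := g) (a2 := ⟨c, h⟩)).symm
  simp_rw [key]
  rw [Finset.sum_ite_eq' Finset.univ ⟨c, h⟩ F, if_pos (Finset.mem_univ _)]

lemma J0_mul_Karc [DecidableEq V] (E : Finset (V × V))
    (hsym : ∀ p ∈ E, Prod.swap p ∈ E) (a b : V × V → Quaternion ℝ)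
    (hab : ∀ p, b p = a (Prod.swap p)) :
    J0 E * Karc E a = Larc E b := by
  refine Matrix.ext fun e v => ?_
  rw [Matrix.mul_apply]
  simp only [J0, Karc, Larc, Matrix.of_apply]
  simp_rw [ite_mul, zero_mul]
  rw [sum_subtype_collapse E (Prod.swap e.1) (hsym e.1 e.2)
    (fun g => (1 : Quaternion ℝ) * (if (g : V × V).1 = v then a g else 0))]
  simp [hab]

lemma J0_conjTranspose [DecidableEq V] (E : Finset (V × V)) :
    (J0 E)ᴴ = J0 E := by
  refine Matrix.ext fun e f => ?_
  simp only [J0, conjTranspose_apply, Matrix.of_apply, apply_ite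
    (star : Quaternion ℝ → Quaternion ℝ), star_one, star_zero]
  refine if_congr ?_ rfl rfl
  constructor
  · intro h; rw [h, Prod.swap_swap]
  · intro h; rw [h, Prod.swap_swap]

lemma J0_mul_J0 [DecidableEq V] (E : Finset (V × V))
    (hsym : ∀ p ∈ E, Prod.swap p ∈ E) :
    J0 E * J0 E = 1 := by
  refine Matrix.ext fun e f => ?_
  rw [Matrix.mul_apply]
  simp only [J0, Matrix.of_apply]
  have : ∀ g : ↥E, (if (g : V × V) = Prod.swap e.1 then (1 : Quaternion ℝ) else 0) *
      (if f.1 = Prod.swap (g : V × V) then 1 else 0) =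
      if (g : V × V) = Prod.swap e.1 then
        (fun p : ↥E => if f.1 = Prod.swap (p : V × V) then (1 : Quaternion ℝ) else 0) g else 0 := by
    intro g; by_cases h : (g : V × V) = Prod.swap e.1 <;> simp [h]
  have hcond : ∀ g : ↥E, ((g : V × V) = Prod.swap e.1) = ((g : V × V) = Prod.swap e.1) := fun _ => rfl
  calc (∑ g : ↥E, (if (g : V × V) = Prod.swap e.1 then (1 : Quaternion ℝ) else 0) *
          (if f.1 = Prod.swap (g : V × V) then 1 else 0))
      = ∑ g : ↥E, if (g : V × V) = Prod.swap e.1 then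
          (fun p : ↥E => if f.1 = Prod.swap (p : V × V) then (1 : Quaternion ℝ) else 0) g else 0 :=
        Finset.sum_congr rfl fun g _ => this g
    _ = if f.1 = Prod.swap (Prod.swap e.1) then 1 else 0 :=
        sum_subtype_collapse E (Prod.swap e.1) (hsym e.1 e.2) _
    _ = (1 : Matrix ↥E ↥E (Quaternion ℝ)) e f := by
        rw [Prod.swap_swap, Matrix.one_apply]
        refine if_congr ?_ rfl rfl
        rw [eq_comm, Subtype.ext_iff]

lemma two_mul_star_mul (x y : Quaternion ℝ) :
    star (((Real.sqrt 2 : ℝ) : Quaternion ℝ) * x) * (((Real.sqrt 2 : ℝ) : Quaternion ℝ) * y) =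
      2 * (star x * y) := by
  rw [StarMul.star_mul, Quaternion.star_coe, mul_assoc,
    ← mul_assoc ((Real.sqrt 2 : ℝ) : Quaternion ℝ), ← Quaternion.coe_mul,
    Real.mul_self_sqrt (by norm_num : (0:ℝ) ≤ 2), ← mul_assoc, ← Quaternion.coe_commutes,
    mul_assoc]
  norm_cast

lemma Karc_conjT_mul_self [Fintype V] [DecidableEq V] (E : Finset (V × V))
    (q : V × V → Quaternion ℝ)
    (hu : ∀ u : V, ∑ e ∈ E.filter (fun p => p.1 = u), Quaternion.normSq (q e) = 1)
    (a : V × V → Quaternion ℝ)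
    (ha : a = fun p => ((Real.sqrt 2 : ℝ) : Quaternion ℝ) * q p) :
    (Karc E a)ᴴ * Karc E a = 2 := by
  have hterm : ∀ p : V × V, star (a p) * a p =
      ((2 * Quaternion.normSq (q p) : ℝ) : Quaternion ℝ) := by
    intro p
    rw [ha]
    simp only []
    rw [two_mul_star_mul, Quaternion.star_mul_self, Quaternion.coe_mul,
      show ((2:ℝ) : Quaternion ℝ) = 2 by norm_cast]
  refine Matrix.ext fun u v => ?_
  rw [Matrix.mul_apply, show (2 : Matrix V V (Quaternion ℝ)) = Matrix.diagonal (fun _ => 2) from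
    (Matrix.diagonal_ofNat 2).symm, Matrix.diagonal_apply]
  simp only [Karc, conjTranspose_apply, Matrix.of_apply]
  simp_rw [apply_ite (star : Quaternion ℝ → Quaternion ℝ), star_zero, ite_mul, mul_ite,
    mul_zero, zero_mul]
  by_cases huv : u = v
  · subst huv
    rw [if_pos rfl]
    simp_rw [ite_self]
    calc (∑ e : ↥E, if (e : V × V).1 = u then
            if (e : V × V).1 = u then star (a e) * a e else 0 else 0)
        = ∑ e : ↥E, (fun p : V × V => if p.1 = u then star (a p) * a p else 0) (e : V × V) := by
          refine Finset.sum_congr rfl fun e _ => ?_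
          by_cases h : (e : V × V).1 = u <;> simp [h]
      _ = ∑ p ∈ E, if p.1 = u then star (a p) * a p else 0 :=
          Finset.sum_coe_sort E (fun p => if p.1 = u then star (a p) * a p else 0)
      _ = ∑ p ∈ E.filter (fun p => p.1 = u), star (a p) * a p := (Finset.sum_filter _ _).symm
      _ = ∑ p ∈ E.filter (fun p => p.1 = u),
            ((2 * Quaternion.normSq (q p) : ℝ) : Quaternion ℝ) :=
          Finset.sum_congr rfl fun p _ => hterm p
      _ = ((∑ p ∈ E.filter (fun p => p.1 = u), 2 * Quaternion.normSq (q p) : ℝ) :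
            Quaternion ℝ) := (map_sum (algebraMap ℝ (Quaternion ℝ)) _ _).symm
      _ = 2 := by rw [← Finset.mul_sum, hu u, mul_one]; norm_cast
  · rw [if_neg huv]
    refine Finset.sum_eq_zero fun e _ => ?_
    by_cases h1 : (e : V × V).1 = u
    · rw [if_pos h1, if_neg (fun h => huv (h1.symm.trans h))]
    · rw [if_neg h1, ite_self]

lemma Karc_conjT_mul_Larc [Fintype V] [DecidableEq V] (E : Finset (V × V))
    (hsym : ∀ p ∈ E, Prod.swap p ∈ E)
    (q : V × V → Quaternion ℝ)
    (a b : V × V → Quaternion ℝ)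
    (ha : a = fun p => ((Real.sqrt 2 : ℝ) : Quaternion ℝ) * q p)
    (hb : b = fun p => ((Real.sqrt 2 : ℝ) : Quaternion ℝ) * q (Prod.swap p)) :
    (Karc E a)ᴴ * Larc E b = Wtil E q := by
  refine Matrix.ext fun u v => ?_
  rw [Matrix.mul_apply]
  simp only [Karc, Larc, Wtil, conjTranspose_apply, Matrix.of_apply]
  have step : ∀ e : ↥E, star (if (e : V × V).1 = u then a e else 0) *
      (if (e : V × V).2 = v then b e else 0) =
      if (e : V × V) = (u, v) then (fun p : ↥E => star (a p) * b p) e else 0 := by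
    intro e
    by_cases h1 : (e : V × V).1 = u <;> by_cases h2 : (e : V × V).2 = v <;>
      simp [h1, h2, Prod.ext_iff]
  rw [Finset.sum_congr rfl fun e _ => step e]
  by_cases hmem : (u, v) ∈ E
  · rw [sum_subtype_collapse E (u, v) hmem (fun p : ↥E => star (a p) * b p),
      if_pos (by simpa using hsym (u, v) hmem)]
    simp only [ha, hb]
    rw [two_mul_star_mul]
    rfl
  · rw [if_neg (fun h => hmem (by simpa using hsym (v, u) h))]
    refine Finset.sum_eq_zero fun e _ => if_neg (fun h => hmem (by rw [← h]; exact e.2))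

end AuxSzegedy

theorem szegedy_KLJ_identities [Fintype V] [DecidableEq V] (E : Finset (V × V))
    (hsym : ∀ p ∈ E, Prod.swap p ∈ E)
    (hconn : ∀ u v : V, Relation.ReflTransGen (fun x y => (x, y) ∈ E) u v)
    (q : V × V → Quaternion ℝ) (hq : ∀ p ∈ E, q p ≠ 0)
    (hu : ∀ u : V, ∑ e ∈ E.filter (fun p => p.1 = u), Quaternion.normSq (q e) = 1)
    (a b : V × V → Quaternion ℝ)
    (ha : a = fun p => ((Real.sqrt 2 : ℝ) : Quaternion ℝ) * q p)
    (hb : b = fun p => ((Real.sqrt 2 : ℝ) : Quaternion ℝ) * q (Prod.swap p)) :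
    ((Karc E a)ᴴ * Karc E a = 2 ∧ (Larc E b)ᴴ * Larc E b = 2) ∧
      J0 E * (Karc E a * (Larc E b)ᴴ) = Larc E b * (Larc E b)ᴴ ∧
      (Larc E b)ᴴ * J0 E * Larc E b = Wtil E q := by
  have hab : ∀ p, b p = a (Prod.swap p) := by
    intro p; rw [ha, hb]
  have hJK : J0 E * Karc E a = Larc E b := J0_mul_Karc E hsym a b hab
  have hJ2 : J0 E * J0 E = 1 := J0_mul_J0 E hsym
  have hK2 : (Karc E a)ᴴ * Karc E a = 2 := Karc_conjT_mul_self E q hu a ha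
  have hL2 : (Larc E b)ᴴ * Larc E b = 2 := by
    rw [← hJK, Matrix.conjTranspose_mul, J0_conjTranspose, Matrix.mul_assoc,
      ← Matrix.mul_assoc (J0 E), hJ2, Matrix.one_mul, hK2]
  refine ⟨⟨hK2, hL2⟩, ?_, ?_⟩
  · rw [← Matrix.mul_assoc, hJK]
  · rw [← hJK, Matrix.conjTranspose_mul, J0_conjTranspose, Matrix.mul_assoc,
      Matrix.mul_assoc, ← Matrix.mul_assoc (J0 E) (J0 E), hJ2, Matrix.one_mul, hJK]
    exact Karc_conjT_mul_Larc E hsym q a b ha hb
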